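/- For every n ≥ 0 there exists an indecomposable representation M of Q with dimension vector (n+1, n+1, n, n+1) together with a short exact sequence of representations 0 → P₃ ⊕ P₄ⁿ → P₁ⁿ⁺¹ → M → 0. -/

import Mathlib

variable (k : Type) [Field k]

/-- A finite-dimensional representation of the quiver `Q` with vertices `1,2,3,4`
and arrows `a : 1 → 2`, `b : 1 → 3`, `c : 2 → 4`, `d : 3 → 4`. -/
structure QRep where
  V1 : Type
  V2 : Type
  V3 : Type
  V4 : Type
  [acg1 : AddCommGroup V1]
  [acg2 : AddCommGroup V2]
  [acg3 : AddCommGroup V3]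
  [acg4 : AddCommGroup V4]
  [mod1 : Module k V1]
  [mod2 : Module k V2]
  [mod3 : Module k V3]
  [mod4 : Module k V4]
  [fin1 : FiniteDimensional k V1]
  [fin2 : FiniteDimensional k V2]
  [fin3 : FiniteDimensional k V3]
  [fin4 : FiniteDimensional k V4]
  ma : V1 →ₗ[k] V2
  mb : V1 →ₗ[k] V3
  mc : V2 →ₗ[k] V4
  md : V3 →ₗ[k] V4

attribute [instance] QRep.acg1 QRep.acg2 QRep.acg3 QRep.acg4
  QRep.mod1 QRep.mod2 QRep.mod3 QRep.mod4
  QRep.fin1 QRep.fin2 QRep.fin3 QRep.fin4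

variable {k}

/-- Morphisms of representations of `Q`. -/
@[ext]
structure QHom (M N : QRep k) where
  f1 : M.V1 →ₗ[k] N.V1
  f2 : M.V2 →ₗ[k] N.V2
  f3 : M.V3 →ₗ[k] N.V3
  f4 : M.V4 →ₗ[k] N.V4
  comm_a : f2 ∘ₗ M.ma = N.ma ∘ₗ f1
  comm_b : f3 ∘ₗ M.mb = N.mb ∘ₗ f1
  comm_c : f4 ∘ₗ M.mc = N.mc ∘ₗ f2
  comm_d : f4 ∘ₗ M.md = N.md ∘ₗ f3

/-- Two representations are isomorphic iff there is a morphism all of whose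
components are bijective. -/
def QIso (M N : QRep k) : Prop :=
  ∃ f : QHom M N, Function.Bijective f.f1 ∧ Function.Bijective f.f2 ∧
    Function.Bijective f.f3 ∧ Function.Bijective f.f4

/-- The zero representation(s). -/
def QRep.IsZeroRep (M : QRep k) : Prop :=
  Subsingleton M.V1 ∧ Subsingleton M.V2 ∧ Subsingleton M.V3 ∧ Subsingleton M.V4

/-- Vertexwise direct sum of representations. -/
def QRep.dsum (M N : QRep k) : QRep k where
  V1 := M.V1 × N.V1
  V2 := M.V2 × N.V2
  V3 := M.V3 × N.V3
  V4 := M.V4 × N.V4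
  ma := M.ma.prodMap N.ma
  mb := M.mb.prodMap N.mb
  mc := M.mc.prodMap N.mc
  md := M.md.prodMap N.md

/-- Direct sum of `n` copies of a representation. -/
def QRep.dpow (M : QRep k) (n : ℕ) : QRep k where
  V1 := Fin n → M.V1
  V2 := Fin n → M.V2
  V3 := Fin n → M.V3
  V4 := Fin n → M.V4
  ma := M.ma.compLeft (Fin n)
  mb := M.mb.compLeft (Fin n)
  mc := M.mc.compLeft (Fin n)
  md := M.md.compLeft (Fin n)

/-- A representation is indecomposable if it is nonzero and not isomorphic to a
direct sum of two nonzero representations. -/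
def QRep.Indecomposable (M : QRep k) : Prop :=
  ¬ M.IsZeroRep ∧ ∀ A B : QRep k, QIso M (A.dsum B) → A.IsZeroRep ∨ B.IsZeroRep

/-- `0 → A → B → C → 0` is short exact (vertexwise). -/
def QShortExact {A B C : QRep k} (f : QHom A B) (g : QHom B C) : Prop :=
  (Function.Injective f.f1 ∧ Function.Injective f.f2 ∧
    Function.Injective f.f3 ∧ Function.Injective f.f4) ∧
  (Function.Surjective g.f1 ∧ Function.Surjective g.f2 ∧
    Function.Surjective g.f3 ∧ Function.Surjective g.f4) ∧
  (LinearMap.range f.f1 = LinearMap.ker g.f1 ∧ LinearMap.range f.f2 = LinearMap.ker g.f2 ∧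
    LinearMap.range f.f3 = LinearMap.ker g.f3 ∧ LinearMap.range f.f4 = LinearMap.ker g.f4)

variable (k)

/-- The `n×n` Jordan block with eigenvalue `lam`, as a linear endomorphism of `kⁿ`. -/
def jordan (n : ℕ) (lam : k) : (Fin n → k) →ₗ[k] (Fin n → k) :=
  Matrix.mulVecLin (Matrix.of fun i j : Fin n =>
    if i = j then lam else if (i : ℕ) + 1 = (j : ℕ) then 1 else 0)

/-- The representation `M_n(λ) = (kⁿ,kⁿ,kⁿ,kⁿ; id,id,id,J_n(λ))`. -/
def Mlam (n : ℕ) (lam : k) : QRep k where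
  V1 := Fin n → k
  V2 := Fin n → k
  V3 := Fin n → k
  V4 := Fin n → k
  ma := LinearMap.id
  mb := LinearMap.id
  mc := LinearMap.id
  md := jordan k n lam

/-- The indecomposable projective `P₁ = (k,k,k,k²)`. -/
def P1 : QRep k where
  V1 := k
  V2 := k
  V3 := k
  V4 := k × k
  ma := LinearMap.id
  mb := LinearMap.id
  mc := LinearMap.inl k k k
  md := LinearMap.inr k k k

/-- The indecomposable projective `P₂ = (0,k,0,k)`. -/
def P2 : QRep k where
  V1 := Fin 0 → k
  V2 := k
  V3 := Fin 0 → k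
  V4 := k
  ma := 0
  mb := 0
  mc := LinearMap.id
  md := 0

/-- The indecomposable projective `P₃ = (0,0,k,k)`. -/
def P3 : QRep k where
  V1 := Fin 0 → k
  V2 := Fin 0 → k
  V3 := k
  V4 := k
  ma := 0
  mb := 0
  mc := 0
  md := LinearMap.id

/-- The indecomposable projective `P₄ = (0,0,0,k)`. -/
def P4 : QRep k where
  V1 := Fin 0 → k
  V2 := Fin 0 → k
  V3 := Fin 0 → k
  V4 := k
  ma := 0
  mb := 0
  mc := 0
  md := 0

/-- projection dropping the last coordinate -/
def pmap (n : ℕ) : (Fin (n+1) → k) →ₗ[k] (Fin n → k) :=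
  LinearMap.funLeft k k Fin.castSucc

/-- shift inclusion: `(ι y) 0 = 0`, `(ι y) (j+1) = y j`. -/
def imap (n : ℕ) : (Fin n → k) →ₗ[k] (Fin (n+1) → k) :=
  LinearMap.pi fun i => Fin.cases 0 (fun j => LinearMap.proj j) i

/-- nilpotent down-shift `N = ι ∘ π`. -/
def Nmap (n : ℕ) : (Fin (n+1) → k) →ₗ[k] (Fin (n+1) → k) :=
  imap k n ∘ₗ pmap k n

variable {k}

lemma pmap_apply (n : ℕ) (x : Fin (n+1) → k) (j : Fin n) :
    pmap k n x j = x j.castSucc := rfl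

lemma pmap_surjective (n : ℕ) : Function.Surjective (pmap k n) := by
  intro y
  refine ⟨fun i => if h : (i:ℕ) < n then y ⟨i, h⟩ else 0, funext fun j => ?_⟩
  simp [pmap_apply]

lemma imap_apply_zero (n : ℕ) (y : Fin n → k) : imap k n y 0 = 0 := rfl

lemma imap_apply_succ (n : ℕ) (y : Fin n → k) (j : Fin n) :
    imap k n y j.succ = y j := by
  simp [imap, LinearMap.pi_apply]

lemma Nmap_apply (n : ℕ) (x : Fin (n+1) → k) (i : Fin (n+1)) :
    Nmap k n x i = if h : 1 ≤ (i:ℕ) then x ⟨(i:ℕ)-1, by omega⟩ else 0 := by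
  induction i using Fin.cases with
  | zero => simp [Nmap, imap_apply_zero]
  | succ j =>
      have h1 : Nmap k n x j.succ = x j.castSucc := by
        simp [Nmap, imap_apply_succ, pmap_apply]
      rw [h1, dif_pos (by simp)]
      congr 1

lemma Nmap_apply_mk (n : ℕ) (x : Fin (n+1) → k) (a : ℕ) (ha : a < n+1) :
    Nmap k n x ⟨a, ha⟩ = if h : 1 ≤ a then x ⟨a-1, by omega⟩ else 0 := by
  rw [Nmap_apply]

lemma Nmap_pow_apply (n m : ℕ) (x : Fin (n+1) → k) (i : Fin (n+1)) :
    ((Nmap k n)^m) x i = if h : m ≤ (i:ℕ) then x ⟨(i:ℕ)-m, by omega⟩ else 0 := by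
  induction m generalizing x i with
  | zero => simp
  | succ m ih =>
      have hs : ((Nmap k n)^(m+1)) x i = ((Nmap k n)^m) (Nmap k n x) i := by
        rw [pow_succ, Module.End.mul_eq_comp]; rfl
      rw [hs, ih]
      by_cases h1 : m ≤ (i:ℕ)
      · rw [dif_pos h1, Nmap_apply_mk]
        by_cases h2 : m+1 ≤ (i:ℕ)
        · rw [dif_pos (by omega), dif_pos h2]
          congr 1
        · rw [dif_neg (by omega), dif_neg h2]
      · rw [dif_neg h1, dif_neg (by omega)]

open Classical in
lemma reach_socle (n : ℕ) (x : Fin (n+1) → k) (hx : x ≠ 0) :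
    ∃ (m : ℕ) (c : k), c ≠ 0 ∧ ((Nmap k n)^m) x = c • (Pi.single (Fin.last n) (1:k) : Fin (n+1) → k) := by
  have hne : (Finset.univ.filter (fun i : Fin (n+1) => x i ≠ 0)).Nonempty := by
    by_contra h
    apply hx
    funext i
    show x i = 0
    by_contra hxi
    exact h ⟨i, by simp [hxi]⟩
  set i0 : Fin (n+1) := (Finset.univ.filter (fun i : Fin (n+1) => x i ≠ 0)).min' hne with hi0
  have hmin : ∀ j : Fin (n+1), x j ≠ 0 → i0 ≤ j := fun j hj =>
    Finset.min'_le _ _ (by simp [hj])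
  have hx0 : x i0 ≠ 0 := by
    have := (Finset.univ.filter (fun i : Fin (n+1) => x i ≠ 0)).min'_mem hne
    simpa using this
  have hi0n : (i0:ℕ) ≤ n := by omega
  refine ⟨n - (i0:ℕ), x i0, hx0, funext fun i => ?_⟩
  rw [Nmap_pow_apply]
  rcases eq_or_ne i (Fin.last n) with h | h
  · subst h
    rw [dif_pos (by simp)]
    have : (⟨(Fin.last n : ℕ) - (n - (i0:ℕ)), by simp⟩ : Fin (n+1)) = i0 :=
      Fin.ext (by simp; omega)
    rw [this]
    simp
  · have hlt : (i:ℕ) < n := by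
      have := i.isLt
      rcases Nat.lt_or_ge (i:ℕ) n with h' | h'
      · exact h'
      · exact absurd (Fin.ext (by simp; omega)) h
    have hz : (Pi.single (Fin.last n) (1:k) : Fin (n+1) → k) i = 0 := by
      rw [Pi.single_apply, if_neg h]
    rw [Pi.smul_apply, hz, smul_zero]
    by_cases hc : n - (i0:ℕ) ≤ (i:ℕ)
    · rw [dif_pos hc]
      by_contra hne0
      have := hmin _ hne0
      simp [Fin.le_def] at this
      omega
    · rw [dif_neg hc]

lemma idem_zero_or_id (n : ℕ) (f : (Fin (n+1) → k) →ₗ[k] (Fin (n+1) → k))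
    (hcomm : f ∘ₗ Nmap k n = Nmap k n ∘ₗ f) (hidem : f ∘ₗ f = f) :
    f = 0 ∨ f = LinearMap.id := by
  by_contra hcon
  push_neg at hcon
  obtain ⟨hf0, hfid⟩ := hcon
  -- nonzero kernel element
  have hker : ∃ u : Fin (n+1) → k, u ≠ 0 ∧ f u = 0 := by
    have : ∃ x, f x ≠ x := by
      by_contra h
      push_neg at h
      exact hfid (LinearMap.ext h)
    obtain ⟨x, hx⟩ := this
    refine ⟨x - f x, fun h => hx (by rw [sub_eq_zero] at h; exact h.symm), ?_⟩
    have := LinearMap.congr_fun hidem x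
    simp only [LinearMap.comp_apply] at this
    rw [map_sub, this, sub_self]
  -- nonzero fixed element
  have hfix : ∃ w : Fin (n+1) → k, w ≠ 0 ∧ f w = w := by
    have : ∃ y, f y ≠ 0 := by
      by_contra h
      push_neg at h
      exact hf0 (LinearMap.ext h)
    obtain ⟨y, hy⟩ := this
    refine ⟨f y, hy, ?_⟩
    have := LinearMap.congr_fun hidem y
    simpa only [LinearMap.comp_apply] using this
  obtain ⟨u, hu, hfu⟩ := hker
  obtain ⟨w, hw, hfw⟩ := hfix
  have hpow : ∀ m : ℕ, f ∘ₗ ((Nmap k n)^m) = ((Nmap k n)^m) ∘ₗ f := by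
    intro m
    have : Commute f (Nmap k n) := by
      rw [Commute, SemiconjBy, Module.End.mul_eq_comp, Module.End.mul_eq_comp, hcomm]
    have := (this.pow_right m)
    rw [Commute, SemiconjBy, Module.End.mul_eq_comp, Module.End.mul_eq_comp] at this
    exact this
  set δ : Fin (n+1) → k := Pi.single (Fin.last n) (1:k) with hδ
  have hfδ : f δ = 0 := by
    obtain ⟨m, c, hc, hmc⟩ := reach_socle n u hu
    have h1 := LinearMap.congr_fun (hpow m) u
    simp only [LinearMap.comp_apply] at h1
    rw [hmc, hfu, map_zero, map_smul] at h1
    rw [hδ]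
    exact (smul_eq_zero_iff_right hc).mp h1
  obtain ⟨m', c', hc', hmc'⟩ := reach_socle n w hw
  have h2 := LinearMap.congr_fun (hpow m') w
  simp only [LinearMap.comp_apply] at h2
  rw [hmc', hfw, hmc', map_smul, ← hδ, hfδ, smul_zero] at h2
  have h3 := congr_fun h2 (Fin.last n)
  simp [hδ, Pi.single_apply] at h3
  exact hc' h3.symm


variable (k)

/-- The representation M with dimension vector (n+1,n+1,n,n+1). -/
def Mrep (n : ℕ) : QRep k where
  V1 := Fin (n+1) → k
  V2 := Fin (n+1) → k
  V3 := Fin n → k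
  V4 := Fin (n+1) → k
  ma := LinearMap.id
  mb := pmap k n
  mc := LinearMap.id
  md := imap k n


variable {k}

lemma pmap_cancel (n : ℕ) {V : Type} [AddCommGroup V] [Module k V]
    (g h : (Fin n → k) →ₗ[k] V) (H : g ∘ₗ pmap k n = h ∘ₗ pmap k n) : g = h := by
  refine LinearMap.ext fun y => ?_
  obtain ⟨x, rfl⟩ := pmap_surjective (k := k) n y
  exact LinearMap.congr_fun H x

variable (k)

/-- The corner projection `(a,b) ↦ (a,0)`. -/
def corner (V W : Type) [AddCommGroup V] [AddCommGroup W] [Module k V] [Module k W] :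
    V × W →ₗ[k] V × W := LinearMap.inl k V W ∘ₗ LinearMap.fst k V W

variable {k}

lemma corner_apply {V W : Type} [AddCommGroup V] [AddCommGroup W] [Module k V] [Module k W]
    (z : V × W) : corner k V W z = (z.1, 0) := rfl

lemma corner_prodMap {V W V' W' : Type} [AddCommGroup V] [AddCommGroup W]
    [AddCommGroup V'] [AddCommGroup W'] [Module k V] [Module k W] [Module k V'] [Module k W']
    (f : V →ₗ[k] V') (g : W →ₗ[k] W') (z : V × W) :
    corner k V' W' (f.prodMap g z) = f.prodMap g (corner k V W z) := by
  simp [corner_apply, LinearMap.prodMap_apply]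

lemma conj_comm_step {V₁ V₂ W₁ W₂ : Type} [AddCommGroup V₁] [AddCommGroup V₂]
    [AddCommGroup W₁] [AddCommGroup W₂] [Module k V₁] [Module k V₂] [Module k W₁] [Module k W₂]
    (μ : V₁ →ₗ[k] V₂) (ν : W₁ →ₗ[k] W₂)
    (F₁ : V₁ →ₗ[k] W₁) (F₂ : V₂ →ₗ[k] W₂)
    (h₁ : Function.Bijective F₁) (h₂ : Function.Bijective F₂)
    (q₁ : W₁ →ₗ[k] W₁) (q₂ : W₂ →ₗ[k] W₂)
    (comm : F₂ ∘ₗ μ = ν ∘ₗ F₁) (hq : ∀ z, q₂ (ν z) = ν (q₁ z)) (x : V₁) :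
    (LinearEquiv.ofBijective F₂ h₂).symm (q₂ (F₂ (μ x))) =
      μ ((LinearEquiv.ofBijective F₁ h₁).symm (q₁ (F₁ x))) := by
  apply h₂.injective
  have e₂ : ∀ t, F₂ ((LinearEquiv.ofBijective F₂ h₂).symm t) = t := fun t =>
    (LinearEquiv.ofBijective F₂ h₂).apply_symm_apply t
  have e₁ : ∀ t, F₁ ((LinearEquiv.ofBijective F₁ h₁).symm t) = t := fun t =>
    (LinearEquiv.ofBijective F₁ h₁).apply_symm_apply t
  rw [e₂]
  have hmu : ∀ y, F₂ (μ y) = ν (F₁ y) := fun y => LinearMap.congr_fun comm y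
  rw [hmu, hmu, e₁, hq]


lemma Mrep_indecomposable (n : ℕ) : (Mrep k n).Indecomposable := by
  constructor
  · rintro ⟨h1, -, -, -⟩
    exact one_ne_zero (congr_fun (@Subsingleton.elim ((Mrep k n).V1) h1 (fun _ => (1:k)) 0) 0)
  · rintro A B ⟨φ, hb1, hb2, hb3, hb4⟩
    let E1 := LinearEquiv.ofBijective φ.f1 hb1
    let E2 := LinearEquiv.ofBijective φ.f2 hb2
    let E3 := LinearEquiv.ofBijective φ.f3 hb3
    let E4 := LinearEquiv.ofBijective φ.f4 hb4
    let q1 : A.V1 × B.V1 →ₗ[k] A.V1 × B.V1 := corner k A.V1 B.V1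
    let q2 : A.V2 × B.V2 →ₗ[k] A.V2 × B.V2 := corner k A.V2 B.V2
    let q3 : A.V3 × B.V3 →ₗ[k] A.V3 × B.V3 := corner k A.V3 B.V3
    let q4 : A.V4 × B.V4 →ₗ[k] A.V4 × B.V4 := corner k A.V4 B.V4
    let e1 : (Fin (n+1) → k) →ₗ[k] (Fin (n+1) → k) := E1.symm.toLinearMap ∘ₗ q1 ∘ₗ φ.f1
    let e2 : (Fin (n+1) → k) →ₗ[k] (Fin (n+1) → k) := E2.symm.toLinearMap ∘ₗ q2 ∘ₗ φ.f2
    let e3 : (Fin n → k) →ₗ[k] (Fin n → k) := E3.symm.toLinearMap ∘ₗ q3 ∘ₗ φ.f3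
    let e4 : (Fin (n+1) → k) →ₗ[k] (Fin (n+1) → k) := E4.symm.toLinearMap ∘ₗ q4 ∘ₗ φ.f4
    have ha : ∀ x, e2 x = e1 x := fun x =>
      conj_comm_step (Mrep k n).ma (A.dsum B).ma φ.f1 φ.f2 hb1 hb2 q1 q2 φ.comm_a
        (fun z => corner_prodMap A.ma B.ma z) x
    have hbb : ∀ x, e3 (pmap k n x) = pmap k n (e1 x) := fun x =>
      conj_comm_step (Mrep k n).mb (A.dsum B).mb φ.f1 φ.f3 hb1 hb3 q1 q3 φ.comm_b
        (fun z => corner_prodMap A.mb B.mb z) x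
    have hcc : ∀ x, e4 x = e2 x := fun x =>
      conj_comm_step (Mrep k n).mc (A.dsum B).mc φ.f2 φ.f4 hb2 hb4 q2 q4 φ.comm_c
        (fun z => corner_prodMap A.mc B.mc z) x
    have hdd : ∀ y, e4 (imap k n y) = imap k n (e3 y) := fun y =>
      conj_comm_step (Mrep k n).md (A.dsum B).md φ.f3 φ.f4 hb3 hb4 q3 q4 φ.comm_d
        (fun z => corner_prodMap A.md B.md z) y
    have hcomm : e1 ∘ₗ Nmap k n = Nmap k n ∘ₗ e1 := by
      refine LinearMap.ext fun x => ?_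
      show e1 (imap k n (pmap k n x)) = imap k n (pmap k n (e1 x))
      calc e1 (imap k n (pmap k n x))
          = e2 (imap k n (pmap k n x)) := (ha _).symm
        _ = e4 (imap k n (pmap k n x)) := (hcc _).symm
        _ = imap k n (e3 (pmap k n x)) := hdd _
        _ = imap k n (pmap k n (e1 x)) := by rw [hbb]
    have hidem : e1 ∘ₗ e1 = e1 := by
      refine LinearMap.ext fun x => ?_
      show E1.symm (q1 (φ.f1 (E1.symm (q1 (φ.f1 x))))) = E1.symm (q1 (φ.f1 x))
      congr 1
      have h6 : φ.f1 (E1.symm (q1 (φ.f1 x))) = q1 (φ.f1 x) := E1.apply_symm_apply _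
      rw [h6]; rfl
    rcases idem_zero_or_id n e1 hcomm hidem with h0 | hid
    · -- A is the zero representation
      left
      have he1 : ∀ x, e1 x = 0 := fun x => LinearMap.congr_fun h0 x
      have he2 : ∀ x, e2 x = 0 := fun x => (ha x).trans (he1 x)
      have he4 : ∀ x, e4 x = 0 := fun x => (hcc x).trans (he2 x)
      have he3 : ∀ y, e3 y = 0 := by
        intro y
        obtain ⟨x, rfl⟩ := pmap_surjective (k := k) n y
        rw [hbb x, he1 x, map_zero]
      have hz1 : ∀ a : A.V1, a = 0 := by
        intro a
        obtain ⟨x, hx⟩ := hb1.surjective (a, 0)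
        have h6 : E1.symm (q1 (φ.f1 x)) = 0 := he1 x
        replace h6 : q1 (φ.f1 x) = 0 := ((LinearEquiv.symm_apply_eq E1).mp h6).trans (map_zero E1)
        replace h6 : corner k A.V1 B.V1 (a, 0) = 0 := (congrArg q1 hx).symm.trans h6
        exact congrArg Prod.fst h6
      have hz2 : ∀ a : A.V2, a = 0 := by
        intro a
        obtain ⟨x, hx⟩ := hb2.surjective (a, 0)
        have h6 : E2.symm (q2 (φ.f2 x)) = 0 := he2 x
        replace h6 : q2 (φ.f2 x) = 0 := ((LinearEquiv.symm_apply_eq E2).mp h6).trans (map_zero E2)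
        replace h6 : corner k A.V2 B.V2 (a, 0) = 0 := (congrArg q2 hx).symm.trans h6
        exact congrArg Prod.fst h6
      have hz3 : ∀ a : A.V3, a = 0 := by
        intro a
        obtain ⟨x, hx⟩ := hb3.surjective (a, 0)
        have h6 : E3.symm (q3 (φ.f3 x)) = 0 := he3 x
        replace h6 : q3 (φ.f3 x) = 0 := ((LinearEquiv.symm_apply_eq E3).mp h6).trans (map_zero E3)
        replace h6 : corner k A.V3 B.V3 (a, 0) = 0 := (congrArg q3 hx).symm.trans h6
        exact congrArg Prod.fst h6
      have hz4 : ∀ a : A.V4, a = 0 := by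
        intro a
        obtain ⟨x, hx⟩ := hb4.surjective (a, 0)
        have h6 : E4.symm (q4 (φ.f4 x)) = 0 := he4 x
        replace h6 : q4 (φ.f4 x) = 0 := ((LinearEquiv.symm_apply_eq E4).mp h6).trans (map_zero E4)
        replace h6 : corner k A.V4 B.V4 (a, 0) = 0 := (congrArg q4 hx).symm.trans h6
        exact congrArg Prod.fst h6
      exact ⟨subsingleton_of_forall_eq 0 hz1, subsingleton_of_forall_eq 0 hz2,
        subsingleton_of_forall_eq 0 hz3, subsingleton_of_forall_eq 0 hz4⟩
    · -- B is the zero representation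
      right
      have he1 : ∀ x, e1 x = x := fun x => LinearMap.congr_fun hid x
      have he2 : ∀ x, e2 x = x := fun x => (ha x).trans (he1 x)
      have he4 : ∀ x, e4 x = x := fun x => (hcc x).trans (he2 x)
      have he3 : ∀ y, e3 y = y := by
        intro y
        obtain ⟨x, rfl⟩ := pmap_surjective (k := k) n y
        rw [hbb x, he1 x]
      have hz1 : ∀ b : B.V1, b = 0 := by
        intro b
        obtain ⟨x, hx⟩ := hb1.surjective (0, b)
        have h6 : E1.symm (q1 (φ.f1 x)) = x := he1 x
        replace h6 := (LinearEquiv.symm_apply_eq E1).mp h6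
        have h7 : E1 x = φ.f1 x := rfl
        replace h6 : corner k A.V1 B.V1 (0, b) = (0, b) := ((congrArg q1 hx).symm.trans h6).trans (h7.trans hx)
        exact (congrArg Prod.snd h6).symm
      have hz2 : ∀ b : B.V2, b = 0 := by
        intro b
        obtain ⟨x, hx⟩ := hb2.surjective (0, b)
        have h6 : E2.symm (q2 (φ.f2 x)) = x := he2 x
        replace h6 := (LinearEquiv.symm_apply_eq E2).mp h6
        have h7 : E2 x = φ.f2 x := rfl
        replace h6 : corner k A.V2 B.V2 (0, b) = (0, b) := ((congrArg q2 hx).symm.trans h6).trans (h7.trans hx)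
        exact (congrArg Prod.snd h6).symm
      have hz3 : ∀ b : B.V3, b = 0 := by
        intro b
        obtain ⟨x, hx⟩ := hb3.surjective (0, b)
        have h6 : E3.symm (q3 (φ.f3 x)) = x := he3 x
        replace h6 := (LinearEquiv.symm_apply_eq E3).mp h6
        have h7 : E3 x = φ.f3 x := rfl
        replace h6 : corner k A.V3 B.V3 (0, b) = (0, b) := ((congrArg q3 hx).symm.trans h6).trans (h7.trans hx)
        exact (congrArg Prod.snd h6).symm
      have hz4 : ∀ b : B.V4, b = 0 := by
        intro b
        obtain ⟨x, hx⟩ := hb4.surjective (0, b)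
        have h6 : E4.symm (q4 (φ.f4 x)) = x := he4 x
        replace h6 := (LinearEquiv.symm_apply_eq E4).mp h6
        have h7 : E4 x = φ.f4 x := rfl
        replace h6 : corner k A.V4 B.V4 (0, b) = (0, b) := ((congrArg q4 hx).symm.trans h6).trans (h7.trans hx)
        exact (congrArg Prod.snd h6).symm
      exact ⟨subsingleton_of_forall_eq 0 hz1, subsingleton_of_forall_eq 0 hz2,
        subsingleton_of_forall_eq 0 hz3, subsingleton_of_forall_eq 0 hz4⟩


variable (k)

/-- the socle generator -/
def dlt (n : ℕ) : Fin (n+1) → k := Pi.single (Fin.last n) 1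

lemma pmap_dlt (n : ℕ) : pmap k n (dlt k n) = 0 := by
  funext j
  show dlt k n j.castSucc = 0
  exact Pi.single_eq_of_ne (Fin.ne_last_of_lt (Fin.castSucc_lt_last j)) 1

lemma Nmap_dlt (n : ℕ) : Nmap k n (dlt k n) = 0 := by
  show imap k n (pmap k n (dlt k n)) = 0
  rw [pmap_dlt, map_zero]

/-- `(t, s) ↦ snoc s t`. -/
def Lmap (n : ℕ) : (k × (Fin n → k)) →ₗ[k] (Fin (n+1) → k) :=
  LinearMap.pi fun i => Fin.lastCases (LinearMap.fst k k (Fin n → k))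
    (fun j => LinearMap.proj j ∘ₗ LinearMap.snd k k (Fin n → k)) i

lemma Lmap_last (n : ℕ) (p : k × (Fin n → k)) : Lmap k n p (Fin.last n) = p.1 := by
  show (Fin.lastCases (motive := fun _ => (k × (Fin n → k)) →ₗ[k] k)
    (LinearMap.fst k k (Fin n → k))
    (fun j => LinearMap.proj j ∘ₗ LinearMap.snd k k (Fin n → k)) (Fin.last n)) p = p.1
  rw [Fin.lastCases_last]
  rfl

lemma Lmap_castSucc (n : ℕ) (p : k × (Fin n → k)) (j : Fin n) :
    Lmap k n p j.castSucc = p.2 j := by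
  show (Fin.lastCases (motive := fun _ => (k × (Fin n → k)) →ₗ[k] k)
    (LinearMap.fst k k (Fin n → k))
    (fun j => LinearMap.proj j ∘ₗ LinearMap.snd k k (Fin n → k)) j.castSucc) p = p.2 j
  rw [Fin.lastCases_castSucc]
  rfl

lemma Lmap_eq (n : ℕ) (h : Fin (n+1) → k) :
    Lmap k n (h (Fin.last n), fun j => h j.castSucc) = h := by
  funext i
  induction i using Fin.lastCases with
  | last => rw [Lmap_last]
  | cast j => rw [Lmap_castSucc]

lemma Lmap_injective (n : ℕ) : Function.Injective (Lmap k n) := by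
  intro p q h
  have h1 := congrFun h (Fin.last n)
  rw [Lmap_last, Lmap_last] at h1
  refine Prod.ext h1 (funext fun j => ?_)
  have h2 := congrFun h j.castSucc
  rwa [Lmap_castSucc, Lmap_castSucc] at h2

lemma Lmap_single (n : ℕ) (t : k) : Lmap k n (t, 0) = t • dlt k n := by
  funext i
  induction i using Fin.lastCases with
  | last => rw [Lmap_last]; simp [dlt]
  | cast j =>
      rw [Lmap_castSucc]
      have : dlt k n j.castSucc = 0 :=
        Pi.single_eq_of_ne (Fin.ne_last_of_lt (Fin.castSucc_lt_last j)) 1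
      simp [this]

/-- The projections of `Fin (n+1) → k × k` onto the two coordinates. -/
def prj1 (n : ℕ) : (Fin (n+1) → k × k) →ₗ[k] (Fin (n+1) → k) :=
  (LinearMap.fst k k k).compLeft (Fin (n+1))

def prj2 (n : ℕ) : (Fin (n+1) → k × k) →ₗ[k] (Fin (n+1) → k) :=
  (LinearMap.snd k k k).compLeft (Fin (n+1))

/-- The quotient map `g : P₁ⁿ⁺¹ → M`. -/
def gHom (n : ℕ) : QHom ((P1 k).dpow (n+1)) (Mrep k n) where
  f1 := LinearMap.id
  f2 := LinearMap.id
  f3 := pmap k n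
  f4 := prj1 k n + (Nmap k n ∘ₗ prj2 k n)
  comm_a := rfl
  comm_b := rfl
  comm_c := by
    refine LinearMap.ext fun x => ?_
    show prj1 k n (((P1 k).dpow (n+1)).mc x) + Nmap k n (prj2 k n (((P1 k).dpow (n+1)).mc x)) = x
    have h1 : prj1 k n (((P1 k).dpow (n+1)).mc x) = x := rfl
    have h2 : prj2 k n (((P1 k).dpow (n+1)).mc x) = 0 := rfl
    rw [h1, h2, map_zero]; exact add_zero _
  comm_d := by
    refine LinearMap.ext fun y => ?_
    show prj1 k n (((P1 k).dpow (n+1)).md y) + Nmap k n (prj2 k n (((P1 k).dpow (n+1)).md y)) =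
      Nmap k n y
    have h1 : prj1 k n (((P1 k).dpow (n+1)).md y) = 0 := rfl
    have h2 : prj2 k n (((P1 k).dpow (n+1)).md y) = y := rfl
    rw [h1, h2, zero_add]

/-- The inclusion `f : P₃ ⊕ P₄ⁿ → P₁ⁿ⁺¹`. -/
def fHom (n : ℕ) : QHom ((P3 k).dsum ((P4 k).dpow n)) ((P1 k).dpow (n+1)) where
  f1 := 0
  f2 := 0
  f3 := LinearMap.toSpanSingleton k (Fin (n+1) → k) (dlt k n) ∘ₗ
    LinearMap.fst k k (Fin n → Fin 0 → k)
  f4 := LinearMap.pi fun i => LinearMap.prod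
    (LinearMap.proj i ∘ₗ (-(Nmap k n ∘ₗ Lmap k n))) (LinearMap.proj i ∘ₗ Lmap k n)
  comm_a := LinearMap.ext fun x => by
    rw [Subsingleton.elim (α := (Fin 0 → k) × (Fin n → Fin 0 → k)) x 0]; simp
  comm_b := LinearMap.ext fun x => by
    rw [Subsingleton.elim (α := (Fin 0 → k) × (Fin n → Fin 0 → k)) x 0]; simp; exact map_zero _
  comm_c := LinearMap.ext fun x => by
    rw [Subsingleton.elim (α := (Fin 0 → k) × (Fin n → Fin 0 → k)) x 0]; simp; exact map_zero _
  comm_d := by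
    refine LinearMap.ext fun p => ?_
    have hmd : ((P3 k).dsum ((P4 k).dpow n)).md p = (p.1, (0 : Fin n → k)) := by
      refine Prod.ext rfl ?_
      funext j
      rfl
    simp only [LinearMap.comp_apply]
    funext i
    show (-(Nmap k n (Lmap k n (p.1, 0))) i, Lmap k n (p.1, 0) i) =
      (0, LinearMap.toSpanSingleton k (Fin (n+1) → k) (dlt k n) p.1 i)
    have key : ∀ t : k, (-(Nmap k n (Lmap k n (t, 0))) i, Lmap k n (t, 0) i) =
        ((0 : k), LinearMap.toSpanSingleton k (Fin (n+1) → k) (dlt k n) t i) := by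
      intro t
      rw [Lmap_single, map_smul, Nmap_dlt, smul_zero]
      simp only [Pi.neg_apply, Pi.zero_apply, neg_zero]
      rfl
    exact key p.1

/-- there is an indecomposable representation `M` of `Q` with the
given dimension vector together with a short exact sequence as indicated. -/
theorem stmt10 (k : Type) [Field k] (n : ℕ) :
    ∃ M : QRep k, M.Indecomposable ∧
      Module.finrank k M.V1 = n+1 ∧ Module.finrank k M.V2 = n+1 ∧
      Module.finrank k M.V3 = n ∧ Module.finrank k M.V4 = n+1 ∧
      ∃ (f : QHom ((P3 k).dsum ((P4 k).dpow n)) ((P1 k).dpow (n+1))) (g : QHom ((P1 k).dpow (n+1)) M), QShortExact f g := by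
  refine ⟨Mrep k n, Mrep_indecomposable n, Module.finrank_fin_fun k,
    Module.finrank_fin_fun k, Module.finrank_fin_fun k, Module.finrank_fin_fun k,
    fHom k n, gHom k n, ⟨?_, ?_, ?_, ?_⟩, ⟨?_, ?_, ?_, ?_⟩, ?_, ?_, ?_, ?_⟩
  · exact fun a b _ => Subsingleton.elim (α := (Fin 0 → k) × (Fin n → Fin 0 → k)) a b
  · exact fun a b _ => Subsingleton.elim (α := (Fin 0 → k) × (Fin n → Fin 0 → k)) a b
  · -- injectivity of f3
    intro p q h
    have h1 : (show k from p.1) • dlt k n = (show k from q.1) • dlt k n := h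
    have h2 := congrFun h1 (Fin.last n)
    replace h2 : (show k from p.1) * dlt k n (Fin.last n) = (show k from q.1) * dlt k n (Fin.last n) := h2
    simp only [dlt, Pi.single_eq_same, mul_one] at h2
    replace h2 := mul_right_cancel₀ (one_ne_zero (α := k)) h2
    exact Prod.ext h2 (Subsingleton.elim (α := Fin n → Fin 0 → k) _ _)
  · -- injectivity of f4
    intro p q h
    apply Lmap_injective k n
    funext i
    have h1 := congrFun h i
    exact congrArg Prod.snd h1
  · exact Function.surjective_id
  · exact Function.surjective_id
  · exact pmap_surjective n
  · -- surjectivity of g4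
    intro w
    refine ⟨fun i => (w i, 0), ?_⟩
    show prj1 k n (fun i => (w i, 0)) + Nmap k n (prj2 k n (fun i => (w i, 0))) = w
    have h1 : prj1 k n (fun i => (w i, (0:k))) = w := rfl
    have h2 : prj2 k n (fun i => (w i, (0:k))) = 0 := rfl
    rw [h1, h2, map_zero]; exact add_zero _
  · -- exactness at V1
    show LinearMap.range (0 : _ →ₗ[k] _) = LinearMap.ker (LinearMap.id : _ →ₗ[k] _)
    rw [LinearMap.range_zero, LinearMap.ker_id]
  · -- exactness at V2
    show LinearMap.range (0 : _ →ₗ[k] _) = LinearMap.ker (LinearMap.id : _ →ₗ[k] _)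
    rw [LinearMap.range_zero, LinearMap.ker_id]
  · -- exactness at V3
    ext x
    simp only [LinearMap.mem_range, LinearMap.mem_ker]
    constructor
    · rintro ⟨p, rfl⟩
      show pmap k n ((fHom k n).f3 p) = 0
      have h1 : (fHom k n).f3 p = (show k from p.1) • dlt k n := rfl
      rw [h1, map_smul, pmap_dlt, smul_zero]
    · intro hx
      refine ⟨(x (Fin.last n), 0), ?_⟩
      show (show k from x (Fin.last n)) • dlt k n = x
      funext i
      induction i using Fin.lastCases with
      | last => show (show k from x (Fin.last n)) * dlt k n (Fin.last n) = _; simp [dlt]; exact mul_one _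
      | cast j =>
          have h0 : x j.castSucc = 0 := congrFun hx j
          have h1 : dlt k n j.castSucc = 0 :=
            Pi.single_eq_of_ne (Fin.ne_last_of_lt (Fin.castSucc_lt_last j)) 1
          show (show k from x (Fin.last n)) * dlt k n j.castSucc = _; rw [h1]; exact (mul_zero (M₀ := k) _).trans h0.symm
  · -- exactness at V4
    ext z
    simp only [LinearMap.mem_range, LinearMap.mem_ker]
    constructor
    · rintro ⟨p, rfl⟩
      show prj1 k n ((fHom k n).f4 p) + Nmap k n (prj2 k n ((fHom k n).f4 p)) = 0
      have h1 : prj1 k n ((fHom k n).f4 p) = -(Nmap k n (Lmap k n p)) := rfl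
      have h2 : prj2 k n ((fHom k n).f4 p) = Lmap k n p := rfl
      rw [h1, h2, neg_add_cancel]
    · intro hz
      have h0 : prj1 k n z + Nmap k n (prj2 k n z) = 0 := hz
      refine ⟨((prj2 k n z) (Fin.last n), fun j => (prj2 k n z) j.castSucc), ?_⟩
      have hL : Lmap k n ((prj2 k n z) (Fin.last n), fun j => (prj2 k n z) j.castSucc) =
        prj2 k n z := Lmap_eq k n (prj2 k n z)
      funext i
      show (-(Nmap k n (Lmap k n _)) i,
        Lmap k n ((prj2 k n z) (Fin.last n), fun j => (prj2 k n z) j.castSucc) i) = z i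
      rw [hL]
      refine Prod.ext ?_ rfl
      show -(Nmap k n (Lmap k n ((prj2 k n z) (Fin.last n), fun j => (prj2 k n z) j.castSucc))) i = (z i).1
      rw [hL]
      have h3 := congrFun h0 i
      have h4 : (z i).1 + Nmap k n (prj2 k n z) i = 0 := h3
      have := neg_eq_of_add_eq_zero_left h4
      simpa using this
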